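/- Let a be a root of 6a³ − 18a² + 9a − 1 = 0, with a ≠ 1/2, 6a²−6a+1 ≠ 0, let u = a(γ−1)+1 ≠ 0, and set p₅ = (2a²−4a+1)/(2u), p₆ = (1−2a)/u, β₄₃ = 1/(6a·p₅), β₁ = a·p₅/p₆, β₂ = 2(1−β₄₃²)/(3−2β₄₃) (assuming 3−2β₄₃ ≠ 0). Then β₄₃·(1/3) + β₂·p₆ = 1/2 and β₄₃²·(1/3) + β₂²·p₆ = 1/3 hold simultaneously if and only if γ satisfies 4a³γ³ − 12a(15a²−10a+1)γ² + 3a(374a²−228a+33)γ + 4(813a²−486a+175/3) = 0. -/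

import Mathlib

set_option maxHeartbeats 2000000 in
theorem gamma_cubic_iff (a γ u : ℝ) (ha : 6*a^3 - 18*a^2 + 9*a - 1 = 0)
    (ha2 : a ≠ 1/2) (hq : 6*a^2 - 6*a + 1 ≠ 0)
    (hu : u = a*(γ-1)+1) (hu0 : u ≠ 0)
    (p₅ : ℝ) (hp5 : p₅ = (2*a^2 - 4*a + 1)/(2*u))
    (p₆ : ℝ) (hp6 : p₆ = (1-2*a)/u)
    (β₄₃ : ℝ) (hb43 : β₄₃ = 1/(6*a*p₅))
    (β₁ : ℝ) (hb1 : β₁ = a*p₅/p₆)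
    (hden : 3 - 2*β₄₃ ≠ 0)
    (β₂ : ℝ) (hb2 : β₂ = 2*(1 - β₄₃^2)/(3 - 2*β₄₃)) :
    (β₄₃*(1/3) + β₂*p₆ = 1/2 ∧ β₄₃^2*(1/3) + β₂^2*p₆ = 1/3) ↔
      4*a^3*γ^3 - 12*a*(15*a^2 - 10*a + 1)*γ^2 + 3*a*(374*a^2 - 228*a + 33)*γ
        + 4*(813*a^2 - 486*a + 175/3) = 0 := by
  subst hb2 hb43 hp6 hp5 hu
  have ha0 : a ≠ 0 := by intro h; rw [h] at ha; norm_num at ha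
  have key : 3*a*(2*a^2 - 4*a + 1) = 6*a^2 - 6*a + 1 := by linear_combination ha
  have h2 : (2*a^2 - 4*a + 1) ≠ 0 := by
    intro h; apply hq; rw [← key, h, mul_zero]
  have hb : (1:ℝ)/(6*a*((2*a^2 - 4*a + 1)/(2*(a*(γ-1)+1)))) = (a*(γ-1)+1)/(6*a^2-6*a+1) := by
    rw [← key]; field_simp; ring
  rw [hb] at hden ⊢
  have h3q : 3*(6*a^2-6*a+1) - 2*(a*(γ-1)+1) ≠ 0 := by
    intro h
    apply hden
    have h1 : 3 - 2*((a*(γ-1)+1)/(6*a^2-6*a+1))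
        = (3*(6*a^2-6*a+1) - 2*(a*(γ-1)+1))/(6*a^2-6*a+1) := by
      rw [eq_div_iff hq, sub_mul, mul_assoc 2, div_mul_cancel₀ _ hq]
    rw [h1, h, zero_div]
  have hd1 : (6*(a*(γ-1)+1)*(6*a^2-6*a+1)*(3*(6*a^2-6*a+1)-2*(a*(γ-1)+1))) ≠ 0 :=
    mul_ne_zero (mul_ne_zero (mul_ne_zero (by norm_num) hu0) hq) h3q
  have hd2 : (3*(a*(γ-1)+1)*(6*a^2-6*a+1)^2*(3*(6*a^2-6*a+1)-2*(a*(γ-1)+1))^2) ≠ 0 :=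
    mul_ne_zero (mul_ne_zero (mul_ne_zero (by norm_num) hu0) (pow_ne_zero 2 hq))
      (pow_ne_zero 2 h3q)
  have hsplit : 3 - 2*((a*(γ-1)+1)/(6*a^2-6*a+1))
      = (3*(6*a^2-6*a+1) - 2*(a*(γ-1)+1))/(6*a^2-6*a+1) := by
    rw [eq_div_iff hq, sub_mul, mul_assoc 2, div_mul_cancel₀ _ hq]
  have key1 : (a*(γ-1)+1)/(6*a^2-6*a+1)*(1/3)
        + 2*(1 - ((a*(γ-1)+1)/(6*a^2-6*a+1))^2)/(3 - 2*((a*(γ-1)+1)/(6*a^2-6*a+1)))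
          *((1-2*a)/(a*(γ-1)+1)) - 1/2
      = (-(4*a^3*γ^3 - 12*a*(15*a^2 - 10*a + 1)*γ^2 + 3*a*(374*a^2 - 228*a + 33)*γ
            + 4*(813*a^2 - 486*a + 175/3))
          + (-697/3 - 60*a - 78*a*γ + 12*a*γ^2 - 90*a^2 - 54*a^2*γ)
            *(6*a^3 - 18*a^2 + 9*a - 1))
        / (6*(a*(γ-1)+1)*(6*a^2-6*a+1)*(3*(6*a^2-6*a+1)-2*(a*(γ-1)+1))) := by
    rw [hsplit]
    have hq' : a*6*(a-1)+1 ≠ 0 := by intro h; apply hq; linear_combination h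
    obtain ⟨E, hE⟩ : ∃ E, E = 3*(6*a^2-6*a+1)-2*(a*(γ-1)+1) := ⟨_, rfl⟩
    rw [← hE]
    have hE0 : E ≠ 0 := hE ▸ h3q
    field_simp
    rw [hE]
    ring
  have key2 : ((a*(γ-1)+1)/(6*a^2-6*a+1))^2*(1/3)
        + (2*(1 - ((a*(γ-1)+1)/(6*a^2-6*a+1))^2)/(3 - 2*((a*(γ-1)+1)/(6*a^2-6*a+1))))^2
          *((1-2*a)/(a*(γ-1)+1)) - 1/3
      = ((4*a^3*γ^3 - 12*a*(15*a^2 - 10*a + 1)*γ^2 + 3*a*(374*a^2 - 228*a + 33)*γ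
            + 4*(813*a^2 - 486*a + 175/3))
            *(a^2*γ^2 + (2*a - 2*a^2)*γ + (-6 + 58*a - 101*a^2))
          + (-1400 + (37762/3)*a - (388/3)*a*γ + 72*a*γ^2 - (54503/3)*a^2
              + (11836/3)*a^2*γ - (1139/3)*a^2*γ^2 - 24*a^2*γ^3 - 4704*a^3
              - 5694*a^3*γ + 936*a^3*γ^2 + 78*a^3*γ^3 - 12*a^3*γ^4 - 8274*a^4
              - 3834*a^4*γ + 198*a^4*γ^2 + 30*a^4*γ^3 + 4320*a^5 + 1080*a^5*γ
              + 432*a^5*γ^2 - 3240*a^6 - 1944*a^6*γ)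
            *(6*a^3 - 18*a^2 + 9*a - 1))
        / (3*(a*(γ-1)+1)*(6*a^2-6*a+1)^2*(3*(6*a^2-6*a+1)-2*(a*(γ-1)+1))^2) := by
    rw [hsplit]
    have hq' : a*6*(a-1)+1 ≠ 0 := by intro h; apply hq; linear_combination h
    obtain ⟨E, hE⟩ : ∃ E, E = 3*(6*a^2-6*a+1)-2*(a*(γ-1)+1) := ⟨_, rfl⟩
    rw [← hE]
    have hE0 : E ≠ 0 := hE ▸ h3q
    field_simp
    rw [hE]
    ring
  constructor
  · rintro ⟨e1, _⟩
    have h0 := sub_eq_zero.mpr e1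
    rw [key1] at h0
    have hn := (div_eq_zero_iff.mp h0).resolve_right hd1
    linear_combination (-1)*hn
      + (-697/3 - 60*a - 78*a*γ + 12*a*γ^2 - 90*a^2 - 54*a^2*γ)*ha
  · intro hT
    constructor
    · have hn : (-(4*a^3*γ^3 - 12*a*(15*a^2 - 10*a + 1)*γ^2 + 3*a*(374*a^2 - 228*a + 33)*γ
            + 4*(813*a^2 - 486*a + 175/3))
          + (-697/3 - 60*a - 78*a*γ + 12*a*γ^2 - 90*a^2 - 54*a^2*γ)
            *(6*a^3 - 18*a^2 + 9*a - 1)) = 0 := by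
        linear_combination (-1)*hT
          + (-697/3 - 60*a - 78*a*γ + 12*a*γ^2 - 90*a^2 - 54*a^2*γ)*ha
      rw [hn, zero_div] at key1
      exact sub_eq_zero.mp key1
    · have hn : ((4*a^3*γ^3 - 12*a*(15*a^2 - 10*a + 1)*γ^2 + 3*a*(374*a^2 - 228*a + 33)*γ
            + 4*(813*a^2 - 486*a + 175/3))
            *(a^2*γ^2 + (2*a - 2*a^2)*γ + (-6 + 58*a - 101*a^2))
          + (-1400 + (37762/3)*a - (388/3)*a*γ + 72*a*γ^2 - (54503/3)*a^2
              + (11836/3)*a^2*γ - (1139/3)*a^2*γ^2 - 24*a^2*γ^3 - 4704*a^3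
              - 5694*a^3*γ + 936*a^3*γ^2 + 78*a^3*γ^3 - 12*a^3*γ^4 - 8274*a^4
              - 3834*a^4*γ + 198*a^4*γ^2 + 30*a^4*γ^3 + 4320*a^5 + 1080*a^5*γ
              + 432*a^5*γ^2 - 3240*a^6 - 1944*a^6*γ)
            *(6*a^3 - 18*a^2 + 9*a - 1)) = 0 := by
        linear_combination (a^2*γ^2 + (2*a - 2*a^2)*γ + (-6 + 58*a - 101*a^2))*hT
          + (-1400 + (37762/3)*a - (388/3)*a*γ + 72*a*γ^2 - (54503/3)*a^2
              + (11836/3)*a^2*γ - (1139/3)*a^2*γ^2 - 24*a^2*γ^3 - 4704*a^3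
              - 5694*a^3*γ + 936*a^3*γ^2 + 78*a^3*γ^3 - 12*a^3*γ^4 - 8274*a^4
              - 3834*a^4*γ + 198*a^4*γ^2 + 30*a^4*γ^3 + 4320*a^5 + 1080*a^5*γ
              + 432*a^5*γ^2 - 3240*a^6 - 1944*a^6*γ)*ha
      rw [hn, zero_div] at key2
      exact sub_eq_zero.mp key2
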